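/- For m ≥ 1 and n ≥ 1 and every fixed z ∈ ℂ, the function ρ ↦ J_{m,n}(z,ρ) is differentiable on ℝ and ∂/∂ρ J_{m,n}(z,ρ) = −m·n · J_{m−1,n−1}(z,ρ) for all ρ ∈ ℝ. -/

import Mathlib

open MeasureTheory ProbabilityTheory Complex Finset

/-- Itô's complex Hermite polynomial `J_{m,n}(z, ρ)`. -/
noncomputable def complexHermite (m n : ℕ) (z : ℂ) (ρ : ℝ) : ℂ :=
  ∑ k ∈ Finset.range (min m n + 1),
    (-1 : ℂ) ^ k * (Nat.factorial k : ℂ) * (Nat.choose m k : ℂ) * (Nat.choose n k : ℂ) *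
      (ρ : ℂ) ^ k * z ^ (m - k) * (starRingEnd ℂ z) ^ (n - k)


/-- For `m, n ≥ 1` and fixed `z`, `ρ ↦ J_{m,n}(z,ρ)` is differentiable on `ℝ` and
`∂/∂ρ J_{m,n}(z,ρ) = −m·n · J_{m-1,n-1}(z,ρ)`. -/
theorem deriv_rho_complexHermite (m n : ℕ) (hm : 1 ≤ m) (hn : 1 ≤ n) (z : ℂ) :
    (∀ ρ : ℝ, DifferentiableAt ℝ (fun r : ℝ => complexHermite m n z r) ρ) ∧
    (∀ ρ : ℝ, deriv (fun r : ℝ => complexHermite m n z r) ρ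
      = -((m : ℂ) * (n : ℂ)) * complexHermite (m - 1) (n - 1) z ρ) := by
  set c : ℕ → ℂ := fun k =>
    (-1 : ℂ) ^ k * (Nat.factorial k : ℂ) * (Nat.choose m k : ℂ) * (Nat.choose n k : ℂ) *
      z ^ (m - k) * (starRingEnd ℂ z) ^ (n - k) with hc
  have h1 : (fun r : ℝ => complexHermite m n z r)
      = fun r : ℝ => ∑ k ∈ Finset.range (min m n + 1), c k * (r : ℂ) ^ k := by
    funext r
    unfold complexHermite
    exact Finset.sum_congr rfl (fun k _ => by simp only [hc]; ring)
  have key : ∀ ρ : ℝ, HasDerivAt (fun r : ℝ => complexHermite m n z r)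
      (∑ k ∈ Finset.range (min m n + 1), c k * (k : ℂ) * (ρ : ℂ) ^ (k - 1)) ρ := by
    intro ρ
    rw [h1]
    apply HasDerivAt.fun_sum
    intro k _
    have h2 : HasDerivAt (fun r : ℝ => ((r : ℂ)) ^ k) ((k : ℂ) * (ρ : ℂ) ^ (k - 1)) ρ := by
      exact (hasDerivAt_pow k ((ρ : ℂ))).comp_ofReal
    simpa [mul_assoc] using h2.const_mul (c k)
  have hsum : ∀ ρ : ℝ,
      ∑ k ∈ Finset.range (min m n + 1), c k * (k : ℂ) * (ρ : ℂ) ^ (k - 1)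
        = -((m : ℂ) * (n : ℂ)) * complexHermite (m - 1) (n - 1) z ρ := by
    intro ρ
    rw [Finset.sum_range_succ']
    have hmin : min m n = min (m - 1) (n - 1) + 1 := by omega
    unfold complexHermite
    rw [Finset.mul_sum, hmin]
    simp only [Nat.cast_zero, mul_zero, zero_mul, add_zero]
    refine Finset.sum_congr rfl (fun j _ => ?_)
    have e1 : (j + 1) * m.choose (j + 1) = m * (m - 1).choose j := by
      have h := Nat.add_one_mul_choose_eq (m - 1) j
      rw [Nat.sub_add_cancel hm] at h
      rw [mul_comm]; exact h.symm
    have e2 : (j + 1) * n.choose (j + 1) = n * (n - 1).choose j := by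
      have h := Nat.add_one_mul_choose_eq (n - 1) j
      rw [Nat.sub_add_cancel hn] at h
      rw [mul_comm]; exact h.symm
    have hnat : (j + 1).factorial * m.choose (j + 1) * n.choose (j + 1) * (j + 1)
        = m * n * (j.factorial * (m - 1).choose j * (n - 1).choose j) := by
      have h3 : (j + 1).factorial * m.choose (j + 1) * n.choose (j + 1) * (j + 1)
          = ((j + 1) * m.choose (j + 1)) * ((j + 1) * n.choose (j + 1)) * j.factorial := by
        rw [Nat.factorial_succ]; ring
      rw [h3, e1, e2]; ring
    have hC : ((j + 1).factorial : ℂ) * (m.choose (j + 1) : ℂ) * (n.choose (j + 1) : ℂ)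
          * ((j : ℂ) + 1)
        = (m : ℂ) * (n : ℂ) * ((j.factorial : ℂ) * ((m - 1).choose j : ℂ)
          * ((n - 1).choose j : ℂ)) := by
      exact_mod_cast congrArg (Nat.cast : ℕ → ℂ) hnat
    simp only [hc]
    rw [show m - (j + 1) = m - 1 - j from by omega, show n - (j + 1) = n - 1 - j from by omega]
    push_cast
    simp only [Nat.add_sub_cancel, pow_succ]
    linear_combination -(-1 : ℂ) ^ j * z ^ (m - 1 - j) * (starRingEnd ℂ z) ^ (n - 1 - j)
      * (ρ : ℂ) ^ j * hC
  exact ⟨fun ρ => (key ρ).differentiableAt,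
    fun ρ => by rw [(key ρ).deriv, hsum ρ]⟩
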